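/- Let $0 \le \alpha < 1$ and $n \ge 2$ even. The $A_\alpha$-energy of the complete bipartite graph $K_{n/2, n/2}$ equals $(1-\alpha)n$, and moreover equality holds in the bound $E_{A_\alpha}(G) \ge \sqrt{2\alpha^2 Z_1 + 4(1-\alpha)^2 m - \frac{8\alpha^2 m^2}{n}}$ for $G = K_{n/2,n/2}$. -/

import Mathlib

open Finset Matrix

section aux

lemma trace_pow_sub_smul_one' {N : Type*} [Fintype N] [DecidableEq N]
    {H : Matrix N N ℝ} (hH : H.IsHermitian) (c : ℝ) (k : ℕ) :
    Matrix.trace ((H - c • 1) ^ k) = ∑ i, (hH.eigenvalues i - c) ^ k := by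
  set U : Matrix N N ℝ := (Matrix.IsHermitian.eigenvectorUnitary hH : Matrix N N ℝ) with hUdef
  have hU1 : U * star U = 1 := Matrix.mem_unitaryGroup_iff.mp (Matrix.IsHermitian.eigenvectorUnitary hH).2
  have hU2 : star U * U = 1 := Matrix.mem_unitaryGroup_iff'.mp (Matrix.IsHermitian.eigenvectorUnitary hH).2
  have h2 : (Matrix.diagonal (RCLike.ofReal ∘ hH.eigenvalues) : Matrix N N ℝ)
      = Matrix.diagonal hH.eigenvalues := by ext i j; simp [Matrix.diagonal_apply]
  have h1' : U * Matrix.diagonal hH.eigenvalues * star U = H := by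
    rw [← h2]; exact hH.spectral_theorem.symm
  have hsub : (Matrix.diagonal (fun i => hH.eigenvalues i - c) : Matrix N N ℝ)
      = Matrix.diagonal hH.eigenvalues - c • 1 := by
    ext i j
    by_cases h : i = j <;> simp [Matrix.diagonal_apply, h, Matrix.one_apply]
  have hD : H - c • 1 = U * Matrix.diagonal (fun i => hH.eigenvalues i - c) * star U := by
    rw [hsub, mul_sub, sub_mul, h1', Matrix.mul_smul, Matrix.smul_mul, mul_one, hU1]
  have hpow : ∀ m : ℕ, (H - c • 1) ^ m
      = U * (Matrix.diagonal (fun i => hH.eigenvalues i - c)) ^ m * star U := by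
    intro m
    induction m with
    | zero => simp [hU1]
    | succ m ih =>
      rw [pow_succ, ih, hD]
      simp only [Matrix.mul_assoc]
      rw [← Matrix.mul_assoc (star U) U, hU2, one_mul, pow_succ]
      simp only [Matrix.mul_assoc]
  rw [hpow k, Matrix.trace_mul_cycle, hU2, one_mul,
    Matrix.diagonal_pow, Matrix.trace_diagonal]
  simp [Pi.pow_apply]


lemma cbg_degree (a : ℕ) [DecidableRel (completeBipartiteGraph (Fin a) (Fin a)).Adj]
    (v : Fin a ⊕ Fin a) : (completeBipartiteGraph (Fin a) (Fin a)).degree v = a := by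
  rw [← SimpleGraph.card_neighborSet_eq_degree]
  cases v with
  | inl i =>
    have h : (completeBipartiteGraph (Fin a) (Fin a)).neighborSet (Sum.inl i)
        = Set.range Sum.inr := by ext w; cases w <;> simp
    rw [Fintype.card_congr ((Equiv.setCongr h).trans
      (Equiv.ofInjective Sum.inr Sum.inr_injective).symm), Fintype.card_fin]
  | inr i =>
    have h : (completeBipartiteGraph (Fin a) (Fin a)).neighborSet (Sum.inr i)
        = Set.range Sum.inl := by ext w; cases w <;> simp
    rw [Fintype.card_congr ((Equiv.setCongr h).trans
      (Equiv.ofInjective Sum.inl Sum.inl_injective).symm), Fintype.card_fin]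

lemma cbg_cube (a : ℕ) [DecidableRel (completeBipartiteGraph (Fin a) (Fin a)).Adj] :
    (completeBipartiteGraph (Fin a) (Fin a)).adjMatrix ℝ ^ 3
    = ((a:ℝ)^2) • (completeBipartiteGraph (Fin a) (Fin a)).adjMatrix ℝ := by
  rw [pow_succ, pow_two]
  ext x y
  cases x <;> cases y <;>
    simp [Matrix.mul_apply, Fintype.sum_sum_type, Finset.mul_sum, Finset.sum_mul] <;> ring

end aux

/-- For `0 ≤ α < 1` and `n = 2a ≥ 2`, the `A_α`-energy of `K_{n/2,n/2} = K_{a,a}`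
equals `(1-α) n`, and it attains equality in the lower bound
`E_{A_α}(G) ≥ √(2 α² Z₁ + 4 (1-α)² m - 8 α² m² / n)`. -/
theorem energy_Aalpha_completeBipartite (a : ℕ) (ha : 1 ≤ a) (α : ℝ)
    (hα0 : 0 ≤ α) (hα1 : α < 1)
    [inst : DecidableRel (completeBipartiteGraph (Fin a) (Fin a)).Adj]
    (hH : (α • Matrix.diagonal
          (fun v => ((completeBipartiteGraph (Fin a) (Fin a)).degree v : ℝ))
        + (1 - α) • (completeBipartiteGraph (Fin a) (Fin a)).adjMatrix ℝ).IsHermitian) :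
    (∑ i, |hH.eigenvalues i
        - 2 * α * ((completeBipartiteGraph (Fin a) (Fin a)).edgeFinset.card : ℝ)
            / (2 * a : ℝ)|
      = (1 - α) * (2 * a : ℝ)) ∧
    (∑ i, |hH.eigenvalues i
        - 2 * α * ((completeBipartiteGraph (Fin a) (Fin a)).edgeFinset.card : ℝ)
            / (2 * a : ℝ)|
      = Real.sqrt (2 * α ^ 2
            * (∑ v, ((completeBipartiteGraph (Fin a) (Fin a)).degree v : ℝ) ^ 2)
          + 4 * (1 - α) ^ 2
            * ((completeBipartiteGraph (Fin a) (Fin a)).edgeFinset.card : ℝ)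
          - 8 * α ^ 2
            * ((completeBipartiteGraph (Fin a) (Fin a)).edgeFinset.card : ℝ) ^ 2
            / (2 * a : ℝ))) := by
  set A := (completeBipartiteGraph (Fin a) (Fin a)).adjMatrix ℝ with hA
  have ha0 : (0:ℝ) < a := by exact_mod_cast ha
  have ha0' : (a:ℝ) ≠ 0 := ne_of_gt ha0
  -- number of edges
  have hm : ((completeBipartiteGraph (Fin a) (Fin a)).edgeFinset.card : ℝ) = (a:ℝ)^2 := by
    have h1 := SimpleGraph.sum_degrees_eq_twice_card_edges (completeBipartiteGraph (Fin a) (Fin a))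
    rw [Finset.sum_congr rfl (fun v _ => cbg_degree a v)] at h1
    simp only [Finset.sum_const, Finset.card_univ, Fintype.card_sum, Fintype.card_fin,
      smul_eq_mul] at h1
    have h2 : 2 * (a * a) = 2 * (completeBipartiteGraph (Fin a) (Fin a)).edgeFinset.card := by rw [← h1]; ring
    have : (completeBipartiteGraph (Fin a) (Fin a)).edgeFinset.card = a * a := by omega
    rw [this]; push_cast; ring
  -- center value
  have hc : 2 * α * ((completeBipartiteGraph (Fin a) (Fin a)).edgeFinset.card : ℝ) / (2 * a : ℝ) = α * a := by
    rw [hm]; field_simp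
  -- matrix identity
  have hHeq : (α • Matrix.diagonal (fun v => (((completeBipartiteGraph (Fin a) (Fin a)).degree v : ℕ) : ℝ)) + (1 - α) • A)
      - (α * a) • 1 = (1 - α) • A := by
    have hdiag : Matrix.diagonal (fun v : Fin a ⊕ Fin a => (((completeBipartiteGraph (Fin a) (Fin a)).degree v : ℕ) : ℝ))
        = (a:ℝ) • 1 := by
      ext i j
      by_cases h : i = j <;> simp [Matrix.diagonal_apply, h, Matrix.one_apply, cbg_degree a]
    rw [hdiag, smul_smul, add_sub_cancel_left]
  -- trace of A^2
  have htr2 : (A ^ 2).trace = 2 * (a:ℝ)^2 := by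
    rw [pow_two, Matrix.trace]
    have : ∀ i, (A * A).diag i = (a : ℝ) := by
      intro i
      simp only [Matrix.diag_apply, hA]
      rw [SimpleGraph.adjMatrix_mul_self_apply_self]
      rw [cbg_degree a i]
    rw [Finset.sum_congr rfl (fun i _ => this i)]
    simp [Fintype.card_sum]; ring
  have hA3 : A ^ 3 = ((a:ℝ)^2) • A := cbg_cube a
  have htr4 : (A ^ 4).trace = 2 * (a:ℝ)^4 := by
    have : A ^ 4 = ((a:ℝ)^2) • A ^ 2 := by
      rw [show (4:ℕ) = 3 + 1 from rfl, pow_succ, hA3, Matrix.smul_mul, ← pow_two]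
    rw [this, Matrix.trace_smul, htr2]; simp; ring
  have htr6 : (A ^ 6).trace = 2 * (a:ℝ)^6 := by
    have : A ^ 6 = ((a:ℝ)^4) • A ^ 2 := by
      rw [show (6:ℕ) = 3 + 3 from rfl, pow_add, hA3, Matrix.smul_mul, Matrix.mul_smul,
        smul_smul, ← pow_two A]
      congr 1; ring
    rw [this, Matrix.trace_smul, htr2]; simp; ring
  -- moments of shifted eigenvalues
  set s : Fin a ⊕ Fin a → ℝ := fun i => hH.eigenvalues i - α * a with hs
  set b : ℝ := (1 - α) * a with hb
  have hbpos : 0 < b := mul_pos (by linarith) ha0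
  have hmom : ∀ k : ℕ, ∑ i, s i ^ k = (1 - α) ^ k * (A ^ k).trace := by
    intro k
    have h := trace_pow_sub_smul_one' hH (α * a) k
    have h2 : (((1 - α) • A) ^ k).trace = ∑ i, (hH.eigenvalues i - α * a) ^ k := by
      conv_lhs => rw [← hHeq]
      exact h
    rw [smul_pow, Matrix.trace_smul, smul_eq_mul] at h2
    exact h2.symm
  have h2 : ∑ i, s i ^ 2 = 2 * b ^ 2 := by rw [hmom 2, htr2, hb]; ring
  have h4 : ∑ i, s i ^ 4 = 2 * b ^ 4 := by rw [hmom 4, htr4, hb]; ring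
  have h6 : ∑ i, s i ^ 6 = 2 * b ^ 6 := by rw [hmom 6, htr6, hb]; ring
  -- each s i ∈ {0, b, -b}
  have hzero : ∑ i, (s i ^ 3 - b ^ 2 * s i) ^ 2 = 0 := by
    have expand : ∀ i : Fin a ⊕ Fin a, (s i ^ 3 - b ^ 2 * s i) ^ 2
        = s i ^ 6 - 2 * b ^ 2 * (s i ^ 4) + b ^ 4 * (s i ^ 2) := fun i => by ring
    rw [Finset.sum_congr rfl (fun i _ => expand i), Finset.sum_add_distrib,
      Finset.sum_sub_distrib, ← Finset.mul_sum, ← Finset.mul_sum, h2, h4, h6]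
    ring
  have hkey : ∀ i, |s i| = s i ^ 2 / b := by
    intro i
    have h0 : (s i ^ 3 - b ^ 2 * s i) ^ 2 = 0 := by
      have := (Finset.sum_eq_zero_iff_of_nonneg
        (fun i _ => sq_nonneg (s i ^ 3 - b ^ 2 * s i))).mp hzero i (Finset.mem_univ i)
      exact this
    have h1 : s i * (s i - b) * (s i + b) = 0 := by
      have := pow_eq_zero_iff (n := 2) (by norm_num) |>.mp h0
      nlinarith [this]
    rcases mul_eq_zero.mp h1 with h | h
    · rcases mul_eq_zero.mp h with h | h
      · rw [h]; simp
      · have : s i = b := by linarith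
        rw [this, abs_of_pos hbpos]; field_simp
    · have : s i = -b := by linarith
      rw [this, abs_neg, abs_of_pos hbpos]; field_simp
  have hsum : ∑ i, |s i| = 2 * b := by
    rw [Finset.sum_congr rfl (fun i _ => hkey i), ← Finset.sum_div, h2]
    field_simp
  have hmain : ∑ i, |hH.eigenvalues i - 2 * α * ((completeBipartiteGraph (Fin a) (Fin a)).edgeFinset.card : ℝ) / (2 * a : ℝ)|
      = (1 - α) * (2 * a : ℝ) := by
    calc ∑ i, |hH.eigenvalues i - 2 * α * ((completeBipartiteGraph (Fin a) (Fin a)).edgeFinset.card : ℝ) / (2 * a : ℝ)|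
        = ∑ i, |s i| := by
          apply Finset.sum_congr rfl; intro i _; rw [hc]
      _ = 2 * b := hsum
      _ = (1 - α) * (2 * a : ℝ) := by rw [hb]; ring
  refine ⟨hmain, ?_⟩
  rw [hmain]
  have hdegsq : ∑ v, (((completeBipartiteGraph (Fin a) (Fin a)).degree v : ℕ) : ℝ) ^ 2 = 2 * (a:ℝ)^3 := by
    rw [Finset.sum_congr rfl (fun v _ => by rw [cbg_degree a v])]
    simp [Fintype.card_sum]; ring
  rw [hdegsq, hm]
  have hrhs : 2 * α ^ 2 * (2 * (a:ℝ)^3) + 4 * (1 - α) ^ 2 * (a:ℝ)^2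
      - 8 * α ^ 2 * ((a:ℝ)^2) ^ 2 / (2 * a : ℝ) = ((1 - α) * (2 * a : ℝ))^2 := by
    field_simp
    ring
  rw [hrhs, Real.sqrt_sq (mul_nonneg (by linarith) (by positivity))]
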